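/- arXiv:1606.05701 — 4 statements merged into one kernel-verified Lean document; each statement's English description precedes it below -/
import Mathlib

section
/- Let I_n = [n!, (n+1)!) for n ∈ ℕ. If A, R ⊆ ℕ, B = ⋃_{n ∈ A} I_n, and there exist N and p > 1/2 with 1/2 + 1/N < p such that for all m ≥ N, |(B ↔ R) ∩ [0,m)| / m ≥ p, then for every n ≥ N: n ∈ A if and only if more than half of the elements of I_n lie in R. -/
open Filter Set

/-- Lower (asymptotic) density of a set of naturals. -/
noncomputable def lowerDensity (Z : Set ℕ) : ℝ :=
  Filter.liminf (fun n => ((Z ∩ Set.Iio n).ncard : ℝ) / n) Filter.atTop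

/-- Upper (asymptotic) density of a set of naturals. -/
noncomputable def upperDensity (Z : Set ℕ) : ℝ :=
  Filter.limsup (fun n => ((Z ∩ Set.Iio n).ncard : ℝ) / n) Filter.atTop

/-- The agreement set `A ↔ R`. -/
def agree (A R : Set ℕ) : Set ℕ := {x | x ∈ A ↔ x ∈ R}

/-- The coarse computability bound `γ(A)`. -/
noncomputable def ccGamma (A : Set ℕ) : ℝ :=
  sSup {r | ∃ R : Set ℕ, ComputablePred (· ∈ R) ∧ r = lowerDensity (agree A R)}

/-- The coarse computability bound of the many-one degree of `A`. -/
noncomputable def GammaM (A : Set ℕ) : ℝ :=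
  sInf {r | ∃ B : Set ℕ, (· ∈ B) ≤₀ (· ∈ A) ∧ r = ccGamma B}

lemma ncard_Iio_nat (n : ℕ) : (Set.Iio n).ncard = n := by
  rw [← Finset.coe_Iio, Set.ncard_coe_finset, Nat.card_Iio]

lemma ncard_Ico_nat (a b : ℕ) : (Set.Ico a b).ncard = b - a := by
  rw [← Finset.coe_Ico, Set.ncard_coe_finset, Nat.card_Ico]

/-- Decoding from the factorial-interval blow-up: if R approximates
B = ⋃_{n ∈ A} [n!, (n+1)!) with density ≥ p > 1/2 + 1/N from N on, then
for all n ≥ N, n ∈ A iff more than half of [n!, (n+1)!) lies in R. -/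
theorem factorial_blowup_decoding (A R : Set ℕ) (N : ℕ) (p : ℝ)
    (hN : 0 < N) (hp : 1 / 2 + 1 / (N : ℝ) < p)
    (hd : ∀ m : ℕ, N ≤ m →
      p ≤ ((agree (⋃ n ∈ A, Set.Ico (Nat.factorial n) (Nat.factorial (n + 1))) R
            ∩ Set.Iio m).ncard : ℝ) / m) :
    ∀ n : ℕ, N ≤ n →
      (n ∈ A ↔ Nat.factorial (n + 1) - Nat.factorial n <
        2 * (R ∩ Set.Ico (Nat.factorial n) (Nat.factorial (n + 1))).ncard) := by
  intro n hn
  have hnpos : 0 < n := hN.trans_le hn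
  set B : Set ℕ := ⋃ k ∈ A, Set.Ico (Nat.factorial k) (Nat.factorial (k + 1)) with hBdef
  set S : Set ℕ := agree B R with hSdef
  set In : Set ℕ := Set.Ico (Nat.factorial n) (Nat.factorial (n + 1)) with hIndef
  set m : ℕ := Nat.factorial (n + 1) with hmdef
  -- membership in In forces block n
  have hblock : ∀ x ∈ In, (x ∈ B ↔ n ∈ A) := by
    intro x hx
    constructor
    · intro hxB
      simp only [hBdef, Set.mem_iUnion] at hxB
      obtain ⟨k, hkA, hk⟩ := hxB
      rcases lt_trichotomy k n with h | h | h
      · exact absurd ((Nat.factorial_le (Nat.succ_le_of_lt h)).trans hx.1)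
          (not_le.mpr hk.2)
      · rwa [← h]
      · exact absurd ((Nat.factorial_le (Nat.succ_le_of_lt h)).trans hk.1)
          (not_le.mpr hx.2)
    · intro hA
      simp only [hBdef, Set.mem_iUnion]
      exact ⟨n, hA, hx⟩
  have hNm : N ≤ m := hn.trans ((Nat.le_succ n).trans (Nat.self_le_factorial (n + 1)))
  have hmpos : (0:ℝ) < (m : ℝ) := by
    exact_mod_cast Nat.factorial_pos (n + 1)
  -- density hypothesis at m
  have h1 : p * (m : ℝ) ≤ ((S ∩ Set.Iio m).ncard : ℝ) :=
    (le_div_iff₀ hmpos).mp (hd m hNm)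
  -- decomposition bound
  have hsub : S ∩ Set.Iio m ⊆ Set.Iio (Nat.factorial n) ∪ (S ∩ In) := by
    intro x hx
    rcases lt_or_ge x (Nat.factorial n) with h | h
    · exact Or.inl h
    · exact Or.inr ⟨hx.1, h, hx.2⟩
  have hfin1 : (Set.Iio (Nat.factorial n)).Finite := Set.finite_Iio _
  have hfin2 : (S ∩ In).Finite := (Set.finite_Ico _ _).inter_of_right _
  have h2 : (S ∩ Set.Iio m).ncard ≤ Nat.factorial n + (S ∩ In).ncard := by
    calc (S ∩ Set.Iio m).ncard ≤ (Set.Iio (Nat.factorial n) ∪ (S ∩ In)).ncard :=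
          Set.ncard_le_ncard hsub (hfin1.union hfin2)
      _ ≤ (Set.Iio (Nat.factorial n)).ncard + (S ∩ In).ncard :=
          Set.ncard_union_le _ _
      _ = Nat.factorial n + (S ∩ In).ncard := by rw [_root_.ncard_Iio_nat]
  -- key real estimate : m < 2 * |S ∩ In|
  have key : (m : ℝ) < 2 * ((S ∩ In).ncard : ℝ) := by
    have hnR : (1:ℝ) ≤ (n : ℝ) := by exact_mod_cast hnpos
    have hNR : (0:ℝ) < (N : ℝ) := by exact_mod_cast hN
    have hNn : (1:ℝ) / (n : ℝ) ≤ 1 / (N : ℝ) :=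
      one_div_le_one_div_of_le hNR (by exact_mod_cast hn)
    have hp2 : 1 / 2 + 1 / (n : ℝ) < p := lt_of_le_of_lt (by linarith) hp
    have hFR : (1:ℝ) ≤ (Nat.factorial n : ℝ) := by
      exact_mod_cast Nat.one_le_iff_ne_zero.mpr (Nat.factorial_ne_zero n)
    have hmF : (m : ℝ) = ((n : ℝ) + 1) * (Nat.factorial n : ℝ) := by
      rw [hmdef]; push_cast [Nat.factorial_succ]; ring
    have h2R : ((S ∩ Set.Iio m).ncard : ℝ) ≤ (Nat.factorial n : ℝ) + ((S ∩ In).ncard : ℝ) := by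
      exact_mod_cast h2
    have hpn : (n : ℝ) / 2 + 1 < p * (n : ℝ) := by
      have h := mul_lt_mul_of_pos_right hp2 (by linarith : (0:ℝ) < (n : ℝ))
      have he : (1 / 2 + 1 / (n : ℝ)) * (n : ℝ) = (n : ℝ) / 2 + 1 := by
        field_simp
      linarith [he ▸ h]
    nlinarith [h1, h2R, hmF, hpn, hFR, hnR,
      mul_lt_mul_of_pos_right hpn (by linarith : (0:ℝ) < (Nat.factorial n : ℝ)),
      mul_lt_mul_of_pos_right hp2 (by linarith : (0:ℝ) < (Nat.factorial n : ℝ))]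
  constructor
  · intro hA
    have hEq : S ∩ In = R ∩ In := by
      ext x
      simp only [hSdef, agree, Set.mem_inter_iff, Set.mem_setOf_eq]
      constructor
      · rintro ⟨h, hx⟩; exact ⟨h.mp ((hblock x hx).mpr hA), hx⟩
      · rintro ⟨h, hx⟩; exact ⟨⟨fun _ => h, fun _ => (hblock x hx).mpr hA⟩, hx⟩
    have : (m : ℕ) < 2 * (R ∩ In).ncard := by
      rw [← hEq]
      exact_mod_cast key
    omega
  · intro hcard
    by_contra hA
    have hEq : S ∩ In = In \ R := by
      ext x
      simp only [hSdef, agree, Set.mem_inter_iff, Set.mem_setOf_eq, Set.mem_diff]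
      constructor
      · rintro ⟨h, hx⟩; exact ⟨hx, fun hR => hA ((hblock x hx).mp (h.mpr hR))⟩
      · rintro ⟨hx, hR⟩
        exact ⟨⟨fun hB => absurd ((hblock x hx).mp hB) hA, fun h => absurd h hR⟩, hx⟩
    have hpart : (In ∩ R).ncard + (In \ R).ncard = In.ncard :=
      Set.ncard_inter_add_ncard_diff_eq_ncard In R (Set.finite_Ico _ _)
    have hInR : (R ∩ In).ncard = (In ∩ R).ncard := by rw [Set.inter_comm]
    have hIcard : In.ncard = m - Nat.factorial n := _root_.ncard_Ico_nat _ _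
    have hkeyN : (m : ℕ) < 2 * (In \ R).ncard := by
      rw [← hEq]
      exact_mod_cast key
    have hFle : Nat.factorial n ≤ m := Nat.factorial_le (Nat.le_succ n)
    have hFpos : 0 < Nat.factorial n := Nat.factorial_pos n
    omega
end

section
/- If a Turing degree 𝐚 is nonzero (non-computable), then Γ_T(𝐚) ≤ 1/2. More precisely, for every non-computable set A ⊆ ℕ, there is a set B many-one reducible to A with γ(B) ≤ 1/2. -/
open Filter Set

/-! ### Auxiliary machinery -/

namespace CCHalf

open Nat

/-- Counting function: `fcnt q a m` counts `x < m` with `q a x = true`. -/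
def fcnt (q : ℕ → ℕ → Bool) (a : ℕ) : ℕ → ℕ
  | 0 => 0
  | m + 1 => fcnt q a m + Bool.toNat (q a m)

lemma computable_fcnt {q : ℕ → ℕ → Bool} (hq : Computable₂ q) : Computable₂ (fcnt q) := by
  have hq' : Computable fun x : (ℕ × ℕ) × ℕ × ℕ => q x.1.1 x.2.1 :=
    hq.comp (Computable.fst.comp .fst) (Computable.fst.comp .snd)
  have step : Computable₂ (fun (p : ℕ × ℕ) (z : ℕ × ℕ) => z.2 + Bool.toNat (q p.1 z.1)) :=
    (Primrec.nat_add.to_comp.comp (Computable.snd.comp .snd)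
      ((Primrec.dom_bool Bool.toNat).to_comp.comp hq')).to₂
  have h : Computable fun p : ℕ × ℕ => fcnt q p.1 p.2 := by
    have H := Computable.nat_rec (f := fun p : ℕ × ℕ => p.2) (g := fun _ : ℕ × ℕ => (0 : ℕ))
      (h := fun p z => z.2 + Bool.toNat (q p.1 z.1)) Computable.snd (Computable.const 0) step
    exact H.of_eq fun p => by
      rcases p with ⟨a, m⟩
      induction m with
      | zero => rfl
      | succ m ih => simp only [fcnt, ← ih]
  exact h

lemma ncard_fcnt (q : ℕ → ℕ → Bool) (a m : ℕ) :
    ({x | q a x = true} ∩ Set.Iio m).ncard = fcnt q a m := by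
  induction m with
  | zero =>
    have h0 : Set.Iio 0 = (∅ : Set ℕ) := by ext x; simp
    simp [fcnt, h0]
  | succ m ih =>
    rcases h : q a m with h' | h'
    · have : {x | q a x = true} ∩ Set.Iio (m + 1) = {x | q a x = true} ∩ Set.Iio m := by
        ext x
        simp only [Set.mem_inter_iff, Set.mem_setOf_eq, Set.mem_Iio, Nat.lt_succ_iff_lt_or_eq]
        constructor
        · rintro ⟨hx, hlt | rfl⟩
          · exact ⟨hx, hlt⟩
          · rw [h] at hx; exact absurd hx (by simp)
        · rintro ⟨hx, hlt⟩; exact ⟨hx, Or.inl hlt⟩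
      rw [this, ih]; simp [fcnt, h]
    · have : {x | q a x = true} ∩ Set.Iio (m + 1) =
          insert m ({x | q a x = true} ∩ Set.Iio m) := by
        ext x
        simp only [Set.mem_inter_iff, Set.mem_setOf_eq, Set.mem_Iio, Set.mem_insert_iff,
          Nat.lt_succ_iff_lt_or_eq]
        constructor
        · rintro ⟨hx, hlt | rfl⟩
          · exact Or.inr ⟨hx, hlt⟩
          · exact Or.inl rfl
        · rintro (rfl | ⟨hx, hlt⟩)
          · exact ⟨h, Or.inr rfl⟩
          · exact ⟨hx, Or.inl hlt⟩
      rw [this, Set.ncard_insert_of_notMem (by simp)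
        ((Set.finite_Iio m).inter_of_right _), ih]
      simp [fcnt, h]

lemma primrec_factorial : Primrec Nat.factorial := by
  have h : Primrec fun x : ℕ =>
      (Nat.rec (motive := fun _ => ℕ) 1 (fun y IH => (y + 1) * IH) x : ℕ) :=
    Primrec.nat_rec' (h := fun _ p => (p.1 + 1) * p.2) Primrec.id (Primrec.const 1)
      ((Primrec.nat_mul.comp (Primrec.succ.comp (Primrec.fst.comp Primrec.snd))
        (Primrec.snd.comp Primrec.snd)).to₂)
  exact h.of_eq fun n => by
    induction n with
    | zero => rfl
    | succ n ih => simp [Nat.factorial_succ, ih]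

lemma primrec_mem_list (l : List ℕ) : Primrec fun n => decide (n ∈ l) := by
  induction l with
  | nil => exact (Primrec.const false).of_eq fun n => by simp
  | cons a l ih =>
    exact ((Primrec.dom_bool₂ Bool.or).comp
      (Primrec.eq.comp Primrec.id (Primrec.const a)).decide ih).of_eq fun n => by
        simp [List.mem_cons, Bool.decide_or]

/-- The reduction function: `fred x` is the `n` with `n ! ≤ x < (n+1)!` (for `x ≥ 1`). -/
def fred (x : ℕ) : ℕ := Nat.findGreatest (fun n => n ! ≤ x) x

lemma computable_fred : Computable fred := by
  have h : Primrec fun x =>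
      (Nat.rec (motive := fun _ => ℕ) 0
        (fun y IH => if (y + 1)! ≤ x then y + 1 else IH) x : ℕ) := by
    exact Primrec.nat_rec'
      (h := fun x p => if (p.1 + 1)! ≤ x then p.1 + 1 else p.2)
      Primrec.id (Primrec.const 0)
      ((Primrec.ite
        (Primrec.nat_le.comp
          (primrec_factorial.comp (Primrec.succ.comp (Primrec.fst.comp Primrec.snd)))
          Primrec.fst)
        (Primrec.succ.comp (Primrec.fst.comp Primrec.snd))
        (Primrec.snd.comp Primrec.snd)).to₂)
  refine (h.of_eq fun x => ?_).to_comp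
  show _ = Nat.findGreatest (fun n => n ! ≤ x) x
  suffices H : ∀ m, (Nat.rec (motive := fun _ => ℕ) 0
      (fun y IH => if (y + 1)! ≤ x then y + 1 else IH) m : ℕ)
      = Nat.findGreatest (fun n => n ! ≤ x) m from H x
  intro m
  induction m with
  | zero => rfl
  | succ m ih => rw [Nat.findGreatest_succ, ← ih]

lemma fred_eq {n x : ℕ} (hn : 1 ≤ n) (h1 : n ! ≤ x) (h2 : x < (n + 1)!) : fred x = n := by
  rw [fred, Nat.findGreatest_eq_iff]
  refine ⟨le_trans (Nat.self_le_factorial n) h1, fun _ => h1, fun k hk hkx hPk => ?_⟩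
  exact absurd hPk (not_le.2 (lt_of_lt_of_le h2 (Nat.factorial_le hk)))

lemma ncard_Iio (n : ℕ) : (Set.Iio n).ncard = n := by
  rw [← Finset.coe_Iio, Set.ncard_coe_finset, Nat.card_Iio]

lemma ncard_Ico (a b : ℕ) : (Set.Ico a b).ncard = b - a := by
  rw [← Finset.coe_Ico, Set.ncard_coe_finset, Nat.card_Ico]

end CCHalf

open Nat in

/-- Every non-computable set A has a set B many-one reducible to it with γ(B) ≤ 1/2. -/
theorem exists_manyOne_ccGamma_le_half (A : Set ℕ) (hA : ¬ ComputablePred (· ∈ A)) :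
    ∃ B : Set ℕ, (· ∈ B) ≤₀ (· ∈ A) ∧ ccGamma B ≤ 1 / 2 := by
  classical
  set B : Set ℕ := CCHalf.fred ⁻¹' A with hB
  refine ⟨B, ⟨CCHalf.fred, CCHalf.computable_fred, fun x => Iff.rfl⟩, ?_⟩
  -- Membership of block elements in B
  have hBlock : ∀ n x, 1 ≤ n → x ∈ Set.Ico (n !) ((n + 1)!) → (x ∈ B ↔ n ∈ A) := by
    intro n x hn hx
    rw [hB, Set.mem_preimage, CCHalf.fred_eq hn hx.1 hx.2]
  apply Real.sSup_le _ (by norm_num)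
  rintro r ⟨R, hR, rfl⟩
  -- extract a boolean decision procedure for R
  obtain ⟨fR, hfR, hfReq⟩ := ComputablePred.computable_iff.1 hR
  have hfRmem : ∀ x, fR x = true ↔ x ∈ R := by
    intro x
    constructor
    · intro h; show (fun a => a ∈ R) x; rw [hfReq]; exact h
    · intro h; have : (fun a => a ∈ R) x := h
      rw [hfReq] at this; exact this
  -- the counting predicate and counting function
  set q : ℕ → ℕ → Bool := fun n x => cond (decide (n ! ≤ x)) (fR x) false with hq
  have hqc : Computable₂ q :=
    (Computable.cond
      ((Primrec.nat_le.comp (CCHalf.primrec_factorial.comp Primrec.fst)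
        Primrec.snd).decide.to_comp)
      (hfR.comp Computable.snd) (Computable.const false)).to₂
  have hqmem : ∀ n x, q n x = true ↔ (n ! ≤ x ∧ x ∈ R) := by
    intro n x
    rw [hq]
    by_cases h : n ! ≤ x <;> simp [h, hfRmem x]
  set cnt : ℕ → ℕ := fun n => CCHalf.fcnt q n ((n + 1)!) with hcntdef
  have hcnt : ∀ n, cnt n = (R ∩ Set.Ico (n !) ((n + 1)!)).ncard := by
    intro n
    rw [hcntdef]
    show CCHalf.fcnt q n ((n + 1)!) = _
    rw [← CCHalf.ncard_fcnt q n ((n + 1)!)]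
    congr 1
    ext x
    simp only [Set.mem_inter_iff, Set.mem_setOf_eq, Set.mem_Iio, Set.mem_Ico, hqmem]
    tauto
  -- the majority-vote guess
  set g : ℕ → Bool := fun n => decide (n * n ! ≤ 2 * cnt n) with hg
  have hgc : Computable g := by
    have h1 : Computable fun n => n * n ! :=
      (Primrec.nat_mul.comp Primrec.id CCHalf.primrec_factorial).to_comp
    have h2 : Computable cnt := by
      have := (CCHalf.computable_fcnt hqc).comp Computable.id
        ((CCHalf.primrec_factorial.comp Primrec.succ).to_comp)
      exact this
    exact Primrec.nat_le.decide.to_comp.comp h1 (Primrec.nat_mul.to_comp.comp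
      (Computable.const 2) h2)
  -- the set of "bad" n where the guess is wrong
  set bad : Set ℕ := {n | ¬ ((g n = true) ↔ n ∈ A)} with hbad
  -- key counting estimate at m = (n+1)! for bad n ≥ 1
  have hkey : ∀ n ∈ bad, 1 ≤ n →
      2 * (agree B R ∩ Set.Iio ((n + 1)!)).ncard ≤ 2 * n ! + n * n ! := by
    intro n hn hn1
    set K : Set ℕ := Set.Ico (n !) ((n + 1)!) with hK
    have hKfin : K.Finite := Set.finite_Ico _ _
    have hKcard : K.ncard = n * n ! := by
      rw [hK, CCHalf.ncard_Ico, Nat.factorial_succ]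
      have : (n + 1) * n ! = n * n ! + n ! := by ring
      omega
    -- 2 * (agree ∩ K).ncard ≤ n * n!
    have hblockbound : 2 * (agree B R ∩ K).ncard ≤ n * n ! := by
      have hr : (R ∩ K).ncard ≤ K.ncard :=
        Set.ncard_le_ncard Set.inter_subset_right hKfin
      by_cases hnA : n ∈ A
      · -- agreement on K equals membership in R
        have heq : agree B R ∩ K = R ∩ K := by
          ext x
          simp only [Set.mem_inter_iff, agree, Set.mem_setOf_eq]
          constructor
          · rintro ⟨hx, hxK⟩
            exact ⟨hx.1 ((hBlock n x hn1 hxK).2 hnA), hxK⟩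
          · rintro ⟨hx, hxK⟩
            exact ⟨⟨fun _ => hx, fun _ => (hBlock n x hn1 hxK).2 hnA⟩, hxK⟩
        have hgfalse : ¬ (n * n ! ≤ 2 * cnt n) := by
          intro hle
          exact hn ⟨fun _ => hnA, fun _ => by rw [hg]; simpa using hle⟩
        rw [heq, ← hcnt n]
        omega
      · -- agreement on K equals complement of R
        have heq : agree B R ∩ K = K \ R := by
          ext x
          simp only [Set.mem_inter_iff, agree, Set.mem_setOf_eq, Set.mem_diff]
          constructor
          · rintro ⟨hx, hxK⟩
            exact ⟨hxK, fun hxR => hnA ((hBlock n x hn1 hxK).1 (hx.2 hxR))⟩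
          · rintro ⟨hxK, hxR⟩
            exact ⟨⟨fun hxB => absurd ((hBlock n x hn1 hxK).1 hxB) hnA,
              fun h => absurd h hxR⟩, hxK⟩
        have hgtrue : n * n ! ≤ 2 * cnt n := by
          by_contra hle
          exact hn ⟨fun h => by rw [hg] at h; simp at h; omega,
            fun h => absurd h hnA⟩
        have hdiff : (K \ R).ncard + (R ∩ K).ncard = K.ncard := by
          rw [← Set.ncard_union_eq (by
              rw [Set.disjoint_iff_inter_eq_empty]
              ext x; simp only [Set.mem_inter_iff, Set.mem_diff, Set.mem_empty_iff_false,
                iff_false]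
              tauto)
            (hKfin.diff) (hKfin.inter_of_right _)]
          congr 1
          ext x
          simp only [Set.mem_union, Set.mem_diff, Set.mem_inter_iff]
          tauto
        have hc2 : cnt n = (R ∩ K).ncard := by rw [hK]; exact hcnt n
        rw [heq]
        omega
    -- total count over Iio (n+1)!
    have hsub : agree B R ∩ Set.Iio ((n + 1)!) ⊆ Set.Iio (n !) ∪ (agree B R ∩ K) := by
      intro x hx
      rcases lt_or_ge x (n !) with h | h
      · exact Or.inl h
      · exact Or.inr ⟨hx.1, h, hx.2⟩
    have hfin : (Set.Iio (n !) ∪ (agree B R ∩ K)).Finite :=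
      (Set.finite_Iio _).union (hKfin.inter_of_right _)
    have := (Set.ncard_le_ncard hsub hfin).trans (Set.ncard_union_le _ _)
    rw [CCHalf.ncard_Iio] at this
    omega
  by_cases hinf : bad.Infinite
  · -- infinitely many bad n ⇒ lower density ≤ 1/2
    rw [lowerDensity]
    apply le_of_forall_pos_le_add
    intro ε hε
    apply Filter.liminf_le_of_frequently_le _
      ⟨0, Filter.eventually_map.2 (Filter.Eventually.of_forall fun m => by positivity)⟩
    rw [Filter.frequently_atTop]
    intro M
    obtain ⟨Kb, hKb⟩ := exists_nat_ge (1 / (2 * ε))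
    obtain ⟨n, hnbad, hngt⟩ := hinf.exists_gt (max (max M Kb) 1)
    have hn1 : 1 ≤ n := le_trans (le_max_right _ _) (le_of_lt hngt)
    have hnM : M ≤ n := le_trans (le_max_left _ _) (le_trans (le_max_left _ _) (le_of_lt hngt))
    have hnKb : Kb ≤ n := le_trans (le_max_right _ _) (le_trans (le_max_left _ _) (le_of_lt hngt))
    refine ⟨(n + 1)!, le_trans hnM (le_trans (Nat.le_succ n) (Nat.self_le_factorial _)), ?_⟩
    have hcard := hkey n hnbad hn1
    -- real arithmetic
    have hFpos : (0 : ℝ) < (n ! : ℝ) := by exact_mod_cast Nat.factorial_pos n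
    have hmpos : (0 : ℝ) < ((n + 1)! : ℝ) := by exact_mod_cast Nat.factorial_pos (n + 1)
    rw [div_le_iff₀ hmpos]
    have hmcast : ((n + 1)! : ℝ) = ((n : ℝ) + 1) * (n ! : ℝ) := by
      rw [Nat.factorial_succ]; push_cast; ring
    have hcardR : 2 * ((agree B R ∩ Set.Iio ((n + 1)!)).ncard : ℝ) ≤
        2 * (n ! : ℝ) + (n : ℝ) * (n ! : ℝ) := by exact_mod_cast hcard
    have hεn : 1 / 2 ≤ ε * ((n : ℝ) + 1) := by
      have h1 : (1 / (2 * ε) : ℝ) ≤ (n : ℝ) + 1 := by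
        calc (1 / (2 * ε) : ℝ) ≤ Kb := hKb
        _ ≤ (n : ℝ) := by exact_mod_cast hnKb
        _ ≤ (n : ℝ) + 1 := by linarith
      calc (1 / 2 : ℝ) = ε * (1 / (2 * ε)) := by field_simp
      _ ≤ ε * ((n : ℝ) + 1) := by
          exact mul_le_mul_of_nonneg_left h1 (le_of_lt hε)
    rw [hmcast]
    have hεF := mul_le_mul_of_nonneg_right hεn (le_of_lt hFpos)
    nlinarith [hcardR, hFpos, hεF]
  · -- finitely many bad n ⇒ A computable, contradiction
    exfalso
    apply hA
    rw [Set.not_infinite] at hinf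
    obtain ⟨N, hN⟩ : ∃ N, ∀ n ∈ bad, n < N := by
      obtain ⟨N0, hN0⟩ := hinf.bddAbove
      exact ⟨N0 + 1, fun n hn => Nat.lt_succ_of_le (hN0 hn)⟩
    set lA : List ℕ := (List.range N).filter (fun k => decide (k ∈ A)) with hlA
    have hlAmem : ∀ k, k ∈ lA ↔ (k < N ∧ k ∈ A) := by
      intro k
      rw [hlA, List.mem_filter, List.mem_range]
      simp
    set h : ℕ → Bool := fun n => cond (decide (n < N)) (decide (n ∈ lA)) (g n) with hh
    have hhc : Computable h :=
      Computable.cond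
        ((Primrec.nat_lt.comp Primrec.id (Primrec.const N)).decide.to_comp)
        (CCHalf.primrec_mem_list lA).to_comp hgc
    apply ComputablePred.computable_iff.2 ⟨h, hhc, ?_⟩
    funext n
    apply propext
    rw [hh]
    by_cases hn : n < N
    · simp only [hn, decide_true, cond_true, decide_eq_true_eq]
      rw [hlAmem]
      exact ⟨fun ha => ⟨hn, ha⟩, fun ⟨_, ha⟩ => ha⟩
    · simp only [hn, decide_false, cond_false]
      have : n ∉ bad := fun hnb => hn (hN n hnb)
      rw [hbad] at this
      simp only [Set.mem_setOf_eq, not_not] at this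
      exact this.symm
end

section
/- Let X follow the hypergeometric distribution H(K, N, n) (number of successes in K draws without replacement from a population of size N containing n successes), and suppose p = K/N > q. Then Pr(X ≤ qn) ≤ exp(−2(p−q)²·n). -/
open Filter Set

/-- The probability mass function of the hypergeometric distribution H(K, N, n). -/
noncomputable def hypergeomPMF (K N n x : ℕ) : ℝ :=
  ((n.choose x : ℝ) * ((N - n).choose (K - x) : ℝ)) / (N.choose K : ℝ)

-- trinomial revision
lemma hg_trinom (n x j : ℕ) : n.choose x * (n - x).choose j = n.choose j * (n - j).choose x := by
  rcases le_or_gt j n with hj | hj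
  · rcases le_or_gt (x + j) n with h | h
    · have hxn : x ≤ n := le_trans (Nat.le_add_right _ _) h
      have hjx : j ≤ n - x := Nat.le_sub_of_add_le (by omega)
      have hxj : x ≤ n - j := Nat.le_sub_of_add_le (by omega)
      have h2 := Nat.choose_mul (n := n) (k := n - x) (s := j) hjx
      rw [Nat.choose_symm hxn, show n - x - j = (n - j) - x by omega,
        Nat.choose_symm hxj] at h2
      exact h2
    · rcases le_or_gt x n with hx | hx
      · rw [Nat.choose_eq_zero_of_lt (show n - x < j by omega),
          Nat.choose_eq_zero_of_lt (show n - j < x by omega)]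
        simp
      · simp [Nat.choose_eq_zero_of_lt hx,
          Nat.choose_eq_zero_of_lt (show n - j < x by omega)]
  · rw [Nat.choose_eq_zero_of_lt hj,
      Nat.choose_eq_zero_of_lt (show n - x < j by omega)]
    simp

-- key factorial-moment identity
lemma hg_key_identity (N K n j : ℕ) (hn : n ≤ N) (hj : j ≤ n) :
    ∑ x ∈ Finset.range (K+1), n.choose x * ((N-n).choose (K-x) * (n - x).choose j)
      = n.choose j * (N-j).choose K := by
  have h1 : ∀ x, n.choose x * ((N-n).choose (K-x) * (n - x).choose j)
      = n.choose j * ((n-j).choose x * (N-n).choose (K-x)) := by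
    intro x
    rw [show n.choose x * ((N-n).choose (K-x) * (n - x).choose j)
        = (n.choose x * (n - x).choose j) * (N-n).choose (K-x) by ring, hg_trinom]
    ring
  simp only [h1, ← Finset.mul_sum]
  congr 1
  have h2 : N - j = (n - j) + (N - n) := by omega
  rw [h2, Nat.add_choose_eq, Finset.Nat.sum_antidiagonal_eq_sum_range_succ_mk]

lemma hg_ratio_step_nat (N K j : ℕ) (hK : K ≤ N) :
    (N - (j+1)).choose K * N ≤ (N - j).choose K * (N - K) := by
  set M := N - j with hM
  clear_value M
  rcases Nat.eq_zero_or_pos M with h0 | hMpos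
  · rcases Nat.eq_zero_or_pos K with hK0 | hK1
    · subst hK0; simp
    · rw [show N - (j+1) = 0 by omega, Nat.choose_eq_zero_of_lt hK1]
      simp
  · have hid : M * (M - 1).choose K = M.choose K * (M - K) := by
      rcases Nat.exists_eq_succ_of_ne_zero (Nat.pos_iff_ne_zero.mp hMpos) with ⟨m, hm⟩
      rw [hm, show m + 1 - 1 = m by omega, Nat.add_one_mul_choose_eq m K,
        Nat.choose_succ_right_eq]
    have hineq : (M - K) * N ≤ (N - K) * M := by
      rw [Nat.sub_mul, Nat.sub_mul, mul_comm N M]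
      exact Nat.sub_le_sub_left (Nat.mul_le_mul_left K (by omega)) (M * N)
    have key : ((M-1).choose K * N) * M ≤ (M.choose K * (N - K)) * M := by
      calc ((M-1).choose K * N) * M = (M * (M-1).choose K) * N := by ring
        _ = (M.choose K * (M - K)) * N := by rw [hid]
        _ = M.choose K * ((M - K) * N) := by ring
        _ ≤ M.choose K * ((N - K) * M) := Nat.mul_le_mul_left _ hineq
        _ = (M.choose K * (N - K)) * M := by ring
    have := Nat.le_of_mul_le_mul_right key hMpos
    rwa [show N - (j+1) = M - 1 by omega]

lemma hg_ratio_bound (N K j : ℕ) (hK : K ≤ N) (hN : 0 < N) :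
    ((N-j).choose K : ℝ) ≤ (N.choose K : ℝ) * (((N:ℝ) - K) / N) ^ j := by
  have hNK : ((N - K : ℕ) : ℝ) = (N : ℝ) - K := by
    push_cast [hK]; ring
  have hNpos : (0:ℝ) < N := by exact_mod_cast hN
  have hfrac : 0 ≤ ((N:ℝ) - K) / N := by
    apply div_nonneg _ (le_of_lt hNpos)
    have : (K:ℝ) ≤ N := by exact_mod_cast hK
    linarith
  induction j with
  | zero => simp
  | succ j ih =>
    have step := hg_ratio_step_nat N K j hK
    have stepR : ((N - (j+1)).choose K : ℝ) * N ≤ ((N - j).choose K : ℝ) * ((N:ℝ) - K) := by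
      rw [← hNK]; exact_mod_cast step
    have h1 : ((N - (j+1)).choose K : ℝ) ≤ ((N - j).choose K : ℝ) * (((N:ℝ) - K)/N) := by
      rw [← mul_div_assoc]
      exact (le_div_iff₀ hNpos).mpr stepR
    calc ((N - (j+1)).choose K : ℝ) ≤ ((N - j).choose K : ℝ) * (((N:ℝ) - K)/N) := h1
      _ ≤ (N.choose K : ℝ) * (((N:ℝ) - K) / N) ^ j * (((N:ℝ) - K)/N) := by
          apply mul_le_mul_of_nonneg_right ih hfrac
      _ = (N.choose K : ℝ) * (((N:ℝ) - K) / N) ^ (j+1) := by ring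

lemma hg_bern_mgf_bound (p s : ℝ) (hp0 : 0 ≤ p) (hp1 : p ≤ 1) (hs : 0 ≤ s) :
    1 - p + p * Real.exp s ≤ Real.exp (p * s + s ^ 2 / 8) := by
  set D : ℝ → ℝ := fun x => 1 - p + p * Real.exp x with hDdef
  have hDpos : ∀ x, 0 < D x := by
    intro x
    simp only [hDdef]
    rcases eq_or_lt_of_le hp0 with h | h
    · simp [← h]
    · have := Real.exp_pos x
      have h2 : 0 < p * Real.exp x := by positivity
      linarith
  have hD : ∀ x, HasDerivAt D (p * Real.exp x) x := by
    intro x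
    exact ((Real.hasDerivAt_exp x).const_mul p).const_add (1 - p)
  set G : ℝ → ℝ := fun x => p + x / 4 - p * Real.exp x / D x with hGdef
  have hG : ∀ x, HasDerivAt G (1 / 4 - p * Real.exp x * (1 - p) / (D x) ^ 2) x := by
    intro x
    have h1 : HasDerivAt (fun x => p * Real.exp x) (p * Real.exp x) x :=
      (Real.hasDerivAt_exp x).const_mul p
    have h2 : HasDerivAt (fun x => p * Real.exp x / D x)
        ((p * Real.exp x * D x - p * Real.exp x * (p * Real.exp x)) / (D x) ^ 2) x :=
      h1.div (hD x) (ne_of_gt (hDpos x))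
    have h3 : HasDerivAt (fun x => p + x / 4) (1 / 4) x := by
      simpa using ((hasDerivAt_id x).div_const 4).const_add p
    have := h3.sub h2
    refine this.congr_deriv ?_
    have hd : D x = 1 - p + p * Real.exp x := rfl
    rw [hd]
    ring
  have hGmono : Monotone G := by
    apply monotone_of_deriv_nonneg
    · intro x
      exact (hG x).differentiableAt
    · intro x
      rw [(hG x).deriv]
      have hd : D x = 1 - p + p * Real.exp x := rfl
      have hDx := hDpos x
      have hE := Real.exp_pos x
      rw [sub_nonneg, div_le_div_iff₀ (by positivity) (by norm_num)]
      nlinarith [sq_nonneg ((1 - p) - p * Real.exp x)]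
  have hG0 : G 0 = 0 := by
    have hd : D 0 = 1 := by simp [hDdef]
    simp [hGdef, hd]
  have hGnonneg : ∀ x, 0 ≤ x → 0 ≤ G x := by
    intro x hx
    rw [← hG0]; exact hGmono hx
  set F : ℝ → ℝ := fun x => p * x + x ^ 2 / 8 - Real.log (D x) with hFdef
  have hF : ∀ x, HasDerivAt F (G x) x := by
    intro x
    have h1 : HasDerivAt (fun x => Real.log (D x)) (p * Real.exp x / D x) x :=
      (hD x).log (ne_of_gt (hDpos x))
    have h2 : HasDerivAt (fun x => p * x + x ^ 2 / 8) (p + x / 4) x := by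
      have h3 : HasDerivAt (fun y => p * y) p x := by
        simpa using (hasDerivAt_id x).const_mul p
      have := h3.add ((hasDerivAt_pow 2 x).div_const 8)
      refine this.congr_deriv ?_
      ring
    exact h2.sub h1
  have hFmono : MonotoneOn F (Set.Ici (0:ℝ)) := by
    apply monotoneOn_of_deriv_nonneg (convex_Ici 0)
    · exact fun x _ => (hF x).differentiableAt.continuousAt.continuousWithinAt
    · intro x _
      exact (hF x).differentiableAt.differentiableWithinAt
    · intro x hx
      rw [(hF x).deriv]
      exact hGnonneg x (le_of_lt (by simpa using hx))
  have hF0 : F 0 = 0 := by simp [hFdef, hDdef]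
  have := hFmono (Set.self_mem_Ici) (Set.mem_Ici.mpr hs) hs
  rw [hF0] at this
  have hlog : Real.log (D s) ≤ p * s + s ^ 2 / 8 := by
    simp only [hFdef] at this; linarith
  have := (Real.log_le_iff_le_exp (hDpos s)).mp hlog
  simpa [hDdef] using this

lemma hg_pow_expand (s : ℝ) (m n : ℕ) (h : m ≤ n) :
    (1 + s)^m = ∑ j ∈ Finset.range (n+1), (m.choose j : ℝ) * s^j := by
  rw [add_comm 1 s, add_pow]
  rw [← Finset.sum_subset (Finset.range_subset_range.mpr (show m + 1 ≤ n + 1 by omega))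
    (fun j _ hj => by
      rw [Finset.mem_range, not_lt] at hj
      rw [Nat.choose_eq_zero_of_lt (by omega)]
      simp)]
  apply Finset.sum_congr rfl
  intro j _
  simp [mul_comm]

/-- Hoeffding's tail bound for the hypergeometric distribution: if X ~ H(K,N,n) and
p = K/N > q, then Pr(X ≤ qn) ≤ exp(−2(p−q)²n). -/
theorem hypergeometric_tail_bound (K N n : ℕ) (q : ℝ) (hN : 0 < N) (hnN : n ≤ N) (hKN : K ≤ N)
    (hq : q < (K : ℝ) / N) :
    ∑ x ∈ Finset.range (N + 1), (if (x : ℝ) ≤ q * n then hypergeomPMF K N n x else 0) ≤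
      Real.exp (-2 * ((K : ℝ) / N - q) ^ 2 * n) := by
  have hNpos : (0:ℝ) < N := by exact_mod_cast hN
  have hCNK : (0:ℝ) < (N.choose K : ℝ) := by exact_mod_cast Nat.choose_pos hKN
  have hpmf_nonneg : ∀ x, 0 ≤ hypergeomPMF K N n x := by
    intro x; unfold hypergeomPMF; positivity
  set p : ℝ := (K:ℝ)/N with hpdef
  have hp0 : 0 ≤ p := by positivity
  have hp1 : p ≤ 1 := by
    rw [hpdef, div_le_one hNpos]; exact_mod_cast hKN
  -- trivial case n = 0
  rcases Nat.eq_zero_or_pos n with hn0 | hn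
  · subst hn0
    have hsum : ∑ x ∈ Finset.range (N + 1),
        (if (x : ℝ) ≤ q * (0:ℕ) then hypergeomPMF K N 0 x else 0) = 1 := by
      rw [Finset.sum_eq_single_of_mem 0 (Finset.mem_range.mpr (by omega))]
      · rw [if_pos (by simp)]
        unfold hypergeomPMF
        simp
        exact Nat.pos_iff_ne_zero.mp (Nat.choose_pos hKN)
      · intro x _ hx
        have : hypergeomPMF K N 0 x = 0 := by
          unfold hypergeomPMF
          rw [Nat.choose_eq_zero_of_lt (by omega)]
          simp
        simp [this]
    rw [hsum]
    simp
  -- trivial case q * n < 0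
  have hnR : (0:ℝ) < n := by exact_mod_cast hn
  rcases lt_or_ge (q * n) 0 with hqn | hqn
  · have hsum : ∑ x ∈ Finset.range (N + 1),
        (if (x : ℝ) ≤ q * n then hypergeomPMF K N n x else 0) = 0 := by
      apply Finset.sum_eq_zero
      intro x _
      rw [if_neg]
      have : (0:ℝ) ≤ x := Nat.cast_nonneg x
      linarith
    rw [hsum]
    exact le_of_lt (Real.exp_pos _)
  have hq0 : 0 ≤ q := by
    by_contra hcon
    push_neg at hcon
    nlinarith
  have hqp : q < p := hq
  -- setup
  set σ : ℝ := 4 * (p - q) with hσdef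
  have hσpos : 0 < σ := by rw [hσdef]; linarith
  set u : ℝ := Real.exp σ with hudef
  have hu1 : 1 ≤ u := Real.one_le_exp (le_of_lt hσpos)
  have hupos : 0 < u := Real.exp_pos σ
  set s : ℝ := u - 1 with hsdef
  have hs0 : 0 ≤ s := by rw [hsdef]; linarith
  have hqnK : q * n < K := by
    have h1 : q * n < p * n := mul_lt_mul_of_pos_right hqp hnR
    have h2 : p * n ≤ K := by
      rw [hpdef, div_mul_eq_mul_div, div_le_iff₀ hNpos]
      have : (n:ℝ) ≤ N := by exact_mod_cast hnN
      have : (0:ℝ) ≤ K := Nat.cast_nonneg K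
      nlinarith [Nat.cast_nonneg (α := ℝ) K]
    linarith
  -- Step 1 : restrict sum range to range (K+1)
  have hstep1 : ∑ x ∈ Finset.range (N + 1),
      (if (x : ℝ) ≤ q * n then hypergeomPMF K N n x else 0)
      = ∑ x ∈ Finset.range (K + 1),
      (if (x : ℝ) ≤ q * n then hypergeomPMF K N n x else 0) := by
    symm
    apply Finset.sum_subset (Finset.range_subset_range.mpr (by omega))
    intro x _ hx
    rw [Finset.mem_range, not_lt] at hx
    rw [if_neg]
    have : (K:ℝ) + 1 ≤ x := by exact_mod_cast hx
    linarith
  -- Step 2 : termwise Chernoff bound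
  have hstep2 : ∀ x ∈ Finset.range (K + 1),
      (if (x : ℝ) ≤ q * n then hypergeomPMF K N n x else 0)
      ≤ Real.exp (σ * (q * n - n)) * (hypergeomPMF K N n x * u ^ (n - x)) := by
    intro x _
    split_ifs with h
    · rcases le_or_gt x n with hxn | hxn
      · have hcast : ((n - x : ℕ) : ℝ) = (n:ℝ) - x := by push_cast [hxn]; ring
        have hpow : u ^ (n - x) = Real.exp (σ * ((n:ℝ) - x)) := by
          rw [hudef, ← Real.exp_nat_mul, hcast, mul_comm]
        have hfac : 1 ≤ Real.exp (σ * (q * n - n)) * u ^ (n - x) := by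
          rw [hpow, ← Real.exp_add]
          apply Real.one_le_exp
          have : σ * (q * n - n) + σ * ((n:ℝ) - x) = σ * (q * n - x) := by ring
          rw [this]
          have : (0:ℝ) ≤ q * n - x := by linarith
          positivity
        calc hypergeomPMF K N n x = 1 * hypergeomPMF K N n x := by ring
          _ ≤ (Real.exp (σ * (q * n - n)) * u ^ (n - x)) * hypergeomPMF K N n x :=
              mul_le_mul_of_nonneg_right hfac (hpmf_nonneg x)
          _ = Real.exp (σ * (q * n - n)) * (hypergeomPMF K N n x * u ^ (n - x)) := by ring
      · have : hypergeomPMF K N n x = 0 := by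
          unfold hypergeomPMF
          rw [Nat.choose_eq_zero_of_lt hxn]
          simp
        simp [this]
    · have := hpmf_nonneg x
      positivity
  -- Step 3 : MGF bound
  have hstep3 : ∑ x ∈ Finset.range (K + 1), hypergeomPMF K N n x * u ^ (n - x)
      ≤ (p + (1 - p) * u) ^ n := by
    have hU : ∑ x ∈ Finset.range (K + 1),
        ((n.choose x : ℝ) * ((N - n).choose (K - x) : ℝ)) * u ^ (n - x)
        ≤ (N.choose K : ℝ) * (p + (1 - p) * u) ^ n := by
      have hexp : ∀ x ∈ Finset.range (K+1),
          ((n.choose x : ℝ) * ((N - n).choose (K - x) : ℝ)) * u ^ (n - x)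
          = ∑ j ∈ Finset.range (n+1),
            ((n.choose x : ℝ) * ((N - n).choose (K - x) : ℝ) * ((n - x).choose j : ℝ)) * s^j := by
        intro x _
        have : u = 1 + s := by rw [hsdef]; ring
        rw [this, hg_pow_expand s (n - x) n (Nat.sub_le n x), Finset.mul_sum]
        apply Finset.sum_congr rfl
        intro j _
        ring
      rw [Finset.sum_congr rfl hexp, Finset.sum_comm]
      have hinner : ∀ j ∈ Finset.range (n+1),
          ∑ x ∈ Finset.range (K+1),
            ((n.choose x : ℝ) * ((N - n).choose (K - x) : ℝ) * ((n - x).choose j : ℝ)) * s^j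
          = ((n.choose j : ℝ) * ((N - j).choose K : ℝ)) * s^j := by
        intro j hj
        rw [← Finset.sum_mul]
        congr 1
        have := hg_key_identity N K n j hnN (by simp at hj; omega)
        have hcast : (((∑ x ∈ Finset.range (K+1),
            n.choose x * ((N-n).choose (K-x) * (n - x).choose j)) : ℕ) : ℝ)
            = ((n.choose j * (N-j).choose K : ℕ) : ℝ) := by rw [this]
        push_cast at hcast
        rw [← hcast]
        apply Finset.sum_congr rfl
        intro x _
        ring
      rw [Finset.sum_congr rfl hinner]
      have hterm : ∀ j ∈ Finset.range (n+1),
          ((n.choose j : ℝ) * ((N - j).choose K : ℝ)) * s^j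
          ≤ (N.choose K : ℝ) * ((n.choose j : ℝ) * (((1:ℝ) - p) * s)^j) := by
        intro j _
        have hrb := hg_ratio_bound N K j hKN hN
        have h1p : ((N:ℝ) - K)/N = 1 - p := by
          rw [hpdef]; field_simp
        rw [h1p] at hrb
        have hsj : (0:ℝ) ≤ s^j := by positivity
        have hnj : (0:ℝ) ≤ (n.choose j : ℝ) := Nat.cast_nonneg _
        calc ((n.choose j : ℝ) * ((N - j).choose K : ℝ)) * s^j
            ≤ ((n.choose j : ℝ) * ((N.choose K : ℝ) * (1 - p)^j)) * s^j := by
              apply mul_le_mul_of_nonneg_right _ hsj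
              exact mul_le_mul_of_nonneg_left hrb hnj
          _ = (N.choose K : ℝ) * ((n.choose j : ℝ) * (((1:ℝ) - p) * s)^j) := by
              rw [mul_pow]; ring
      calc ∑ j ∈ Finset.range (n+1), ((n.choose j : ℝ) * ((N - j).choose K : ℝ)) * s^j
          ≤ ∑ j ∈ Finset.range (n+1),
            (N.choose K : ℝ) * ((n.choose j : ℝ) * (((1:ℝ) - p) * s)^j) :=
            Finset.sum_le_sum hterm
        _ = (N.choose K : ℝ) * ∑ j ∈ Finset.range (n+1),
            ((n.choose j : ℝ) * (((1:ℝ) - p) * s)^j) := by rw [Finset.mul_sum]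
        _ = (N.choose K : ℝ) * (1 + (1 - p) * s) ^ n := by
            rw [← hg_pow_expand ((1 - p) * s) n n le_rfl]
        _ = (N.choose K : ℝ) * (p + (1 - p) * u) ^ n := by
            congr 2
            rw [hsdef]; ring
    have hT : ∑ x ∈ Finset.range (K + 1), hypergeomPMF K N n x * u ^ (n - x)
        = (∑ x ∈ Finset.range (K + 1),
          ((n.choose x : ℝ) * ((N - n).choose (K - x) : ℝ)) * u ^ (n - x)) / (N.choose K : ℝ) := by
      rw [Finset.sum_div]
      apply Finset.sum_congr rfl
      intro x _
      unfold hypergeomPMF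
      ring
    rw [hT, div_le_iff₀ hCNK]
    linarith [hU]
  -- Step 4 : assembly
  have hb : (0:ℝ) ≤ p + (1 - p) * u := by
    have : (0:ℝ) ≤ (1 - p) * u := mul_nonneg (by linarith) (le_of_lt hupos)
    linarith
  have hmgf : p + (1 - p) * u ≤ Real.exp ((1 - p) * σ + σ^2 / 8) := by
    have := hg_bern_mgf_bound (1 - p) σ (by linarith) (by linarith) (le_of_lt hσpos)
    calc p + (1 - p) * u = 1 - (1 - p) + (1 - p) * Real.exp σ := by rw [hudef]; ring
      _ ≤ Real.exp ((1 - p) * σ + σ^2 / 8) := this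
  calc ∑ x ∈ Finset.range (N + 1), (if (x : ℝ) ≤ q * n then hypergeomPMF K N n x else 0)
      = ∑ x ∈ Finset.range (K + 1), (if (x : ℝ) ≤ q * n then hypergeomPMF K N n x else 0) :=
        hstep1
    _ ≤ ∑ x ∈ Finset.range (K + 1),
        Real.exp (σ * (q * n - n)) * (hypergeomPMF K N n x * u ^ (n - x)) :=
        Finset.sum_le_sum hstep2
    _ = Real.exp (σ * (q * n - n)) *
        ∑ x ∈ Finset.range (K + 1), hypergeomPMF K N n x * u ^ (n - x) := by
        rw [Finset.mul_sum]
    _ ≤ Real.exp (σ * (q * n - n)) * (p + (1 - p) * u) ^ n := by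
        apply mul_le_mul_of_nonneg_left hstep3 (le_of_lt (Real.exp_pos _))
    _ ≤ Real.exp (σ * (q * n - n)) * Real.exp ((1 - p) * σ + σ^2 / 8) ^ n := by
        apply mul_le_mul_of_nonneg_left _ (le_of_lt (Real.exp_pos _))
        exact pow_le_pow_left₀ hb hmgf n
    _ = Real.exp (σ * (q * n - n) + n * ((1 - p) * σ + σ^2 / 8)) := by
        rw [← Real.exp_nat_mul, ← Real.exp_add]
    _ = Real.exp (-2 * ((K : ℝ) / N - q) ^ 2 * n) := by
        congr 1
        rw [hσdef, hpdef]
        ring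
end

section
/- Let f : ℕ → ℕ and let I be a finite set. Partition I as I = I* ∪ I**¹ ∪ I**² (disjoint), where f restricted to I* is injective with image disjoint from f(I**¹ ∪ I**²), f restricted to each of I**¹, I**² is injective, and f(I**¹) = f(I**²). Let A ⊆ ℕ, B := f⁻¹(A), and B* := I**¹ (viewed inside I). Then |(B ↔ B*) ∩ (I**¹ ∪ I**²)| = |I**¹|. -/
open Filter Set

/-- The pairing argument: on the doubled part I**¹ ∪ I**², the approximation B* = I**¹
agrees with B = f⁻¹(A) on exactly |I**¹| elements. -/
theorem doubled_part_agreement (f : ℕ → ℕ) (Istar I1 I2 : Finset ℕ)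
    (h12 : Disjoint I1 I2) (hs1 : Disjoint Istar I1) (hs2 : Disjoint Istar I2)
    (hinjs : Set.InjOn f ↑Istar) (hinj1 : Set.InjOn f ↑I1) (hinj2 : Set.InjOn f ↑I2)
    (him : I1.image f = I2.image f)
    (himdisj : Disjoint (Istar.image f) ((I1 ∪ I2).image f))
    (A : Set ℕ) :
    (agree (f ⁻¹' A) ↑I1 ∩ ↑(I1 ∪ I2)).ncard = I1.card := by
  classical
  have hset : (agree (f ⁻¹' A) ↑I1 ∩ ↑(I1 ∪ I2)) =
      ↑(I1.filter (fun x => f x ∈ A) ∪ I2.filter (fun x => f x ∉ A)) := by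
    ext x
    simp only [agree, Set.mem_inter_iff, Set.mem_setOf_eq, Set.mem_preimage,
      Finset.coe_union, Finset.coe_filter, Set.mem_union, Finset.mem_coe,
      Finset.mem_union, Set.mem_setOf_eq]
    constructor
    · rintro ⟨hiff, hx1 | hx2⟩
      · exact Or.inl ⟨hx1, hiff.mpr hx1⟩
      · have hx1 : x ∉ I1 := fun h => (Finset.disjoint_left.mp h12) h hx2
        exact Or.inr ⟨hx2, fun hA => hx1 (hiff.mp hA)⟩
    · rintro (⟨hx1, hA⟩ | ⟨hx2, hA⟩)
      · exact ⟨⟨fun _ => hx1, fun _ => hA⟩, Or.inl hx1⟩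
      · have hx1 : x ∉ I1 := fun h => (Finset.disjoint_left.mp h12) h hx2
        exact ⟨⟨fun h => absurd h hA, fun h => absurd h hx1⟩, Or.inr hx2⟩
  rw [hset, Set.ncard_coe_finset]
  rw [Finset.card_union_of_disjoint (by
    exact Finset.disjoint_filter_filter h12)]
  have h1 : (I1.filter (fun x => f x ∈ A)).card = ((I1.image f).filter (· ∈ A)).card := by
    rw [Finset.filter_image]
    exact (Finset.card_image_of_injOn (hinj1.mono (by intro x hx; exact (Finset.mem_filter.mp hx).1))).symm
  have h2 : (I2.filter (fun x => f x ∉ A)).card = ((I2.image f).filter (· ∉ A)).card := by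
    rw [Finset.filter_image]
    exact (Finset.card_image_of_injOn (hinj2.mono (by intro x hx; exact (Finset.mem_filter.mp hx).1))).symm
  rw [h1, h2, ← him, Finset.card_filter_add_card_filter_not,
    Finset.card_image_of_injOn hinj1]
end
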